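/- The density ρ_g of the pushforward g*m of the Haar measure under an element g of the infinite-dimensional p-adic affine group satisfies ∫_{ℚ_p} |ρ_g(x) − 1| dm(x) < ∞; equivalently, ρ_g − 1 is a compactly supported locally constant real-valued function. -/

import Mathlib

open MeasureTheory
open scoped ENNReal

noncomputable instance (p : ℕ) [Fact p.Prime] : MeasurableSpace ℚ_[p] := borel _
instance (p : ℕ) [Fact p.Prime] : BorelSpace ℚ_[p] := ⟨rfl⟩

lemma indicator_isLocallyConstant {X : Type*} [TopologicalSpace X] {S : Set X}
    (hS : IsClopen S) (v : ℝ) : IsLocallyConstant (S.indicator fun _ => v) := by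
  apply (IsLocallyConstant.iff_exists_open _).2
  intro x
  by_cases hx : x ∈ S
  · exact ⟨S, hS.2, hx, fun y hy => by simp [Set.indicator_of_mem, hx, hy]⟩
  · exact ⟨Sᶜ, hS.1.isOpen_compl, hx, fun y hy => by
      simp [Set.indicator_of_notMem, hx, Set.notMem_of_mem_compl hy]⟩

lemma isLocallyConstant_finsum {X ι : Type*} [TopologicalSpace X] (s : Finset ι)
    (g : ι → X → ℝ) (h : ∀ i, IsLocallyConstant (g i)) :
    IsLocallyConstant (fun x => ∑ i ∈ s, g i x) := by
  classical
  induction s using Finset.induction with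
  | empty => simp only [Finset.sum_empty]; exact IsLocallyConstant.const (0 : ℝ)
  | insert _ _ hj ih =>
    simp only [Finset.sum_insert hj]
    exact (h _).add ih

/-- The density `ρ_g = ∑ |a_k|_p 1_{C_k} + 1_{K^c}` (with `C_k = a_k⁻¹(B_k + b_k)`, the
`B_k` pairwise disjoint balls with union `K`) of the pushforward `g*m` of Haar measure
under an element `g` of the infinite-dimensional `p`-adic affine group satisfies
`∫ |ρ_g − 1| dm < ∞`; equivalently, `ρ_g − 1` is a compactly supported locally constant
real-valued function. -/
theorem padicAff_density_integrable (p : ℕ) [Fact p.Prime] (m : Measure ℚ_[p])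
    [m.IsAddHaarMeasure] (hm : m (Metric.closedBall 0 1) = 1)
    (N : ℕ) (c : Fin N → ℚ_[p]) (r : Fin N → ℝ) (hr : ∀ k, 0 < r k)
    (B : Fin N → Set ℚ_[p]) (hB : ∀ k, B k = Metric.closedBall (c k) (r k))
    (hdisj : (Set.univ : Set (Fin N)).Pairwise (fun i j => Disjoint (B i) (B j)))
    (K : Set ℚ_[p]) (hK : K = ⋃ k, B k)
    (aco : Fin N → ℚ_[p]) (ha : ∀ k, aco k ≠ 0) (bco : Fin N → ℚ_[p])
    (C : Fin N → Set ℚ_[p]) (hC : ∀ k, C k = (fun x => (x + bco k) / aco k) '' B k)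
    (ρ : ℚ_[p] → ℝ)
    (hρ : ∀ x, ρ x = (∑ k, Set.indicator (C k) (fun _ => ‖aco k‖) x)
        + Set.indicator Kᶜ (fun _ => (1 : ℝ)) x) :
    (∫⁻ x, ENNReal.ofReal |ρ x - 1| ∂m) < ∞ ∧
    HasCompactSupport (fun x => ρ x - 1) ∧
    IsLocallyConstant (fun x => ρ x - 1) := by
  have hapos : ∀ k, (0:ℝ) < ‖aco k‖ := fun k => norm_pos_iff.2 (ha k)
  -- C k is a closed ball
  have hCball : ∀ k, C k = Metric.closedBall ((c k + bco k) / aco k) (r k / ‖aco k‖) := by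
    intro k
    rw [hC, hB]
    ext x
    simp only [Set.mem_image, Metric.mem_closedBall]
    constructor
    · rintro ⟨y, hy, rfl⟩
      have h1 : (y + bco k) / aco k - (c k + bco k) / aco k = (y - c k) / aco k := by ring
      rw [dist_eq_norm, h1, norm_div]
      rw [dist_eq_norm] at hy
      gcongr
    · intro hx
      have hmd : ∀ y : ℚ_[p], aco k * (y / aco k) = y := fun y => by
        rw [mul_comm, div_mul_cancel₀ _ (ha k)]
      refine ⟨aco k * x - bco k, ?_, ?_⟩
      swap
      · show (aco k * x - bco k + bco k) / aco k = x
        rw [sub_add_cancel, mul_comm, mul_div_cancel_right₀ _ (ha k)]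
      have h1 : aco k * x - bco k - c k = aco k * (x - (c k + bco k) / aco k) := by
        rw [mul_sub, hmd]; ring
      rw [dist_eq_norm, h1, norm_mul]
      rw [dist_eq_norm] at hx
      calc ‖aco k‖ * ‖x - (c k + bco k) / aco k‖ ≤ ‖aco k‖ * (r k / ‖aco k‖) := by
            gcongr
        _ = r k := by
            rw [mul_div_assoc', mul_comm, mul_div_assoc, div_self (ne_of_gt (hapos k)), mul_one]
  have hCclopen : ∀ k, IsClopen (C k) := fun k => by
    rw [hCball k]
    exact IsUltrametricDist.isClopen_closedBall _ (ne_of_gt (div_pos (hr k) (hapos k)))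
  have hBclopen : ∀ k, IsClopen (B k) := fun k => by
    rw [hB k]
    exact IsUltrametricDist.isClopen_closedBall _ (ne_of_gt (hr k))
  have hKclopen : IsClopen K := by
    rw [hK]; exact isClopen_iUnion_of_finite fun k => hBclopen k
  have hCcpt : ∀ k, IsCompact (C k) := fun k => by
    rw [hCball k]; exact isCompact_closedBall _ _
  have hKcpt : IsCompact K := by
    rw [hK]
    exact isCompact_iUnion fun k => (hB k) ▸ isCompact_closedBall _ _
  set S : Set ℚ_[p] := (⋃ k, C k) ∪ K with hS
  have hScpt : IsCompact S := (isCompact_iUnion hCcpt).union hKcpt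
  have hzero : ∀ x ∉ S, ρ x - 1 = 0 := by
    intro x hx
    simp only [hS, Set.mem_union, Set.mem_iUnion, not_or, not_exists] at hx
    rw [hρ x]
    rw [Finset.sum_eq_zero fun k _ => Set.indicator_of_notMem (hx.1 k) _,
      Set.indicator_of_mem (Set.mem_compl hx.2)]
    ring
  refine ⟨?_, HasCompactSupport.intro hScpt hzero, ?_⟩
  · -- integral bound
    set M : ℝ≥0∞ := ENNReal.ofReal ((∑ k, ‖aco k‖) + 2) with hM
    have hbound : ∀ x, ENNReal.ofReal |ρ x - 1| ≤ S.indicator (fun _ => M) x := by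
      intro x
      by_cases hx : x ∈ S
      · rw [Set.indicator_of_mem hx]
        apply ENNReal.ofReal_le_ofReal
        have h1 : |ρ x - 1| ≤ |ρ x| + 1 := by
          calc |ρ x - 1| ≤ |ρ x| + |(1:ℝ)| := abs_sub _ _
            _ = |ρ x| + 1 := by norm_num
        have h2 : |ρ x| ≤ (∑ k, ‖aco k‖) + 1 := by
          rw [hρ x]
          calc |(∑ k, Set.indicator (C k) (fun _ => ‖aco k‖) x)
                + Set.indicator Kᶜ (fun _ => (1:ℝ)) x|
              ≤ |(∑ k, Set.indicator (C k) (fun _ => ‖aco k‖) x)|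
                + |Set.indicator Kᶜ (fun _ => (1:ℝ)) x| := abs_add_le _ _
            _ ≤ (∑ k, ‖aco k‖) + 1 := by
                gcongr
                · calc |(∑ k, Set.indicator (C k) (fun _ => ‖aco k‖) x)|
                      ≤ ∑ k, |Set.indicator (C k) (fun _ => ‖aco k‖) x| :=
                        Finset.abs_sum_le_sum_abs _ _
                    _ ≤ ∑ k, ‖aco k‖ := by
                        apply Finset.sum_le_sum
                        intro k _
                        rw [abs_of_nonneg (Set.indicator_nonneg (fun _ _ => norm_nonneg _) x)]
                        exact Set.indicator_le_self' (fun _ _ => norm_nonneg _) x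
                · rw [abs_of_nonneg (Set.indicator_nonneg (fun _ _ => zero_le_one) x)]
                  exact Set.indicator_le_self' (fun _ _ => zero_le_one) x
        linarith
      · rw [Set.indicator_of_notMem hx, hzero x hx]
        simp
    calc (∫⁻ x, ENNReal.ofReal |ρ x - 1| ∂m)
        ≤ ∫⁻ x, S.indicator (fun _ => M) x ∂m := lintegral_mono hbound
      _ = M * m S := by
          rw [lintegral_indicator (hScpt.isClosed.measurableSet), setLIntegral_const]
      _ < ∞ := ENNReal.mul_lt_top ENNReal.ofReal_lt_top hScpt.measure_lt_top
  · -- locally constant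
    have : (fun x => ρ x - 1) =
        fun x => ((∑ k, Set.indicator (C k) (fun _ => ‖aco k‖) x)
          + Set.indicator Kᶜ (fun _ => (1:ℝ)) x) - 1 := by
      funext x; rw [hρ x]
    rw [this]
    apply IsLocallyConstant.sub
    · apply IsLocallyConstant.add
      · exact isLocallyConstant_finsum _ _ fun k =>
          indicator_isLocallyConstant (hCclopen k) _
      · exact indicator_isLocallyConstant hKclopen.compl _
    · exact IsLocallyConstant.const 1
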